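/- Let K be a compact Hausdorff space and let f : C(K) → ℂ be an orthogonally additive holomorphic function of bounded type with Taylor expansion f = ∑_{k≥1} P_k at zero. Suppose for each k that μ_k is a complex regular Borel measure on K with P_k(x) = ∫_K x(t)^k dμ_k(t) for all x, and that μ is a finite positive Borel measure on K such that μ_k is absolutely continuous with respect to μ for every k. Then there exist functions g_k ∈ L¹(μ) with ‖g_k‖_{L¹(μ)} ≤ ‖P_k‖ for every k, ∑_{k≥1} ‖g_k‖_{L¹(μ)} r^k < ∞ for every r > 0, and f(x) = ∫_K ∑_{k≥1} g_k(t) x(t)^k dμ(t) for all x ∈ C(K), the series ∑_k g_k x^k converging absolutely in L¹(μ) for every x. -/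

import Mathlib

open MeasureTheory Filter Topology

open MeasureTheory Filter Topology

/-- `f` is orthogonally additive when it is additive on orthogonal pairs. -/
def IsOrthAdd {K : Type*} [TopologicalSpace K] [CompactSpace K]
    (f : C(K, ℂ) → ℂ) : Prop :=
  ∀ x y : C(K, ℂ), x * y = 0 → f (x + y) = f x + f y

/-- `P` is a continuous `k`-homogeneous polynomial on `C(K, ℂ)`. -/
def IsHomogPoly {K : Type*} [TopologicalSpace K] [CompactSpace K]
    (k : ℕ) (P : C(K, ℂ) → ℂ) : Prop :=
  ∃ M : ContinuousMultilinearMap ℂ (fun _ : Fin k => C(K, ℂ)) ℂ,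
    ∀ x : C(K, ℂ), P x = M (fun _ => x)

/-- The norm `‖P‖ = sup_{‖x‖ ≤ 1} |P x|` of a polynomial on `C(K, ℂ)`. -/
noncomputable def polyNorm {K : Type*} [TopologicalSpace K] [CompactSpace K]
    (P : C(K, ℂ) → ℂ) : ℝ :=
  sSup ((fun x => ‖P x‖) '' Metric.closedBall (0 : C(K, ℂ)) 1)


lemma norm_pow_sub_pow_le_aux (a b : ℂ) (ha : ‖a‖ ≤ 1) (hb : ‖b‖ ≤ 1) (n : ℕ) :
    ‖a ^ n - b ^ n‖ ≤ n * ‖a - b‖ := by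
  induction n with
  | zero => simp
  | succ n ih =>
    have h : a ^ (n + 1) - b ^ (n + 1) = a * (a ^ n - b ^ n) + (a - b) * b ^ n := by ring
    calc ‖a ^ (n + 1) - b ^ (n + 1)‖ ≤ ‖a * (a ^ n - b ^ n)‖ + ‖(a - b) * b ^ n‖ := by
          rw [h]; exact norm_add_le _ _
      _ = ‖a‖ * ‖a ^ n - b ^ n‖ + ‖a - b‖ * ‖b‖ ^ n := by rw [norm_mul, norm_mul, norm_pow]
      _ ≤ 1 * (n * ‖a - b‖) + ‖a - b‖ * 1 := by
          exact add_le_add (mul_le_mul ha ih (norm_nonneg _) zero_le_one)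
            (mul_le_mul_of_nonneg_left (pow_le_one₀ (norm_nonneg _) hb) (norm_nonneg _))
      _ = (n + 1 : ℕ) * ‖a - b‖ := by push_cast; ring


lemma polyNorm_bddAbove {K : Type*} [TopologicalSpace K] [CompactSpace K]
    {k : ℕ} {P : C(K, ℂ) → ℂ} (hP : IsHomogPoly k P) :
    BddAbove ((fun x => ‖P x‖) '' Metric.closedBall (0 : C(K, ℂ)) 1) := by
  obtain ⟨M, hM⟩ := hP
  refine ⟨‖M‖, ?_⟩
  rintro - ⟨x, hx, rfl⟩
  rw [Metric.mem_closedBall, dist_zero_right] at hx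
  calc ‖P x‖ = ‖M (fun _ => x)‖ := by rw [hM]
    _ ≤ ‖M‖ * ∏ _i : Fin k, ‖x‖ := M.le_opNorm _
    _ ≤ ‖M‖ * 1 := by
        refine mul_le_mul_of_nonneg_left ?_ (norm_nonneg M)
        rw [Finset.prod_const]
        exact pow_le_one₀ (norm_nonneg _) hx
    _ = ‖M‖ := mul_one _

lemma le_polyNorm {K : Type*} [TopologicalSpace K] [CompactSpace K]
    {k : ℕ} {P : C(K, ℂ) → ℂ} (hP : IsHomogPoly k P) {x : C(K, ℂ)} (hx : ‖x‖ ≤ 1) :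
    ‖P x‖ ≤ polyNorm P :=
  le_csSup (polyNorm_bddAbove hP)
    ⟨x, by simpa [Metric.mem_closedBall, dist_zero_right] using hx, rfl⟩


lemma tv_bound {K : Type*} [TopologicalSpace K] [CompactSpace K] [T2Space K]
    [MeasurableSpace K] [BorelSpace K]
    (k : ℕ) (hk : 1 ≤ k) (P : C(K, ℂ) → ℂ) (hP : IsHomogPoly k P)
    (m : Measure K) [IsFiniteMeasure m] [m.Regular]
    (w : K → ℂ) (hwm : Measurable w) (hw1 : ∀ t, ‖w t‖ = 1)
    (hrep : ∀ x : C(K, ℂ), P x = ∫ t, (x t) ^ k * w t ∂m) :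
    (m Set.univ).toReal ≤ polyNorm P := by
  have hk0 : (k : ℝ) ≠ 0 := Nat.cast_ne_zero.2 (by omega)
  have hkC : (k : ℂ) ≠ 0 := Nat.cast_ne_zero.2 (by omega)
  refine le_of_forall_pos_le_add fun ε hε => ?_
  -- the measurable k-th root of `conj w`
  set x0 : K → ℂ := fun t => (starRingEnd ℂ) (Complex.exp (((Complex.arg (w t) / k : ℝ) : ℂ) * Complex.I)) with hx0
  have hx0norm : ∀ t, ‖x0 t‖ = 1 := by
    intro t
    rw [hx0]
    simp only
    rw [Complex.norm_conj, Complex.norm_exp_ofReal_mul_I]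
  have hx0k : ∀ t, (x0 t) ^ k = (starRingEnd ℂ) (w t) := by
    intro t
    rw [hx0]
    simp only
    rw [← map_pow, ← Complex.exp_nat_mul]
    congr 1
    have : (k : ℂ) * (((Complex.arg (w t) / k : ℝ) : ℂ) * Complex.I)
        = ((Complex.arg (w t) : ℝ) : ℂ) * Complex.I := by
      push_cast
      field_simp
    rw [this]
    have habs : ‖w t‖ = 1 := by exact hw1 t
    have := Complex.norm_mul_exp_arg_mul_I (w t)
    rw [habs] at this
    simpa using this
  have hx0meas : Measurable x0 := by
    have harg : Measurable fun t => ((Complex.arg (w t) / k : ℝ) : ℂ) * Complex.I :=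
      (Complex.measurable_ofReal.comp ((Complex.measurable_arg.comp hwm).div_const _)).mul_const _
    have : Measurable fun t => Complex.exp (((Complex.arg (w t) / k : ℝ) : ℂ) * Complex.I) :=
      Complex.continuous_exp.measurable.comp harg
    rw [hx0]
    simp only [starRingEnd_apply]
    exact continuous_star.measurable.comp this
  have hx0int : Integrable x0 m := by
    refine (integrable_const (1 : ℝ)).mono' hx0meas.aestronglyMeasurable ?_
    exact Eventually.of_forall fun t => by rw [hx0norm t]
  -- approximate by a bounded continuous function
  set δ : ℝ := ε / (2 * k) with hδ
  have hδpos : 0 < δ := by positivity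
  obtain ⟨y, hy, hyint⟩ := hx0int.exists_boundedContinuous_integral_sub_le hδpos
  -- truncate to the unit ball
  have hden : ∀ t : K, ((max 1 ‖y t‖ : ℝ) : ℂ) ≠ 0 := by
    intro t
    rw [Ne, Complex.ofReal_eq_zero]
    positivity
  set z : C(K, ℂ) := ⟨fun t => y t / ((max 1 ‖y t‖ : ℝ) : ℂ), by
    apply Continuous.div y.continuous
    · exact Complex.continuous_ofReal.comp (continuous_const.max (y.continuous.norm))
    · exact hden⟩ with hzdef
  have hz1 : ∀ t, ‖z t‖ ≤ 1 := by
    intro t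
    have hmax : (0:ℝ) < max 1 ‖y t‖ := by positivity
    rw [hzdef]
    simp only [ContinuousMap.coe_mk]
    rw [norm_div, Complex.norm_real, Real.norm_of_nonneg hmax.le, div_le_one hmax]
    exact le_max_right _ _
  have hzclose : ∀ t, ‖z t - x0 t‖ ≤ 2 * ‖x0 t - y t‖ := by
    intro t
    have h1 : ‖z t - y t‖ ≤ ‖x0 t - y t‖ := by
      rcases le_or_gt ‖y t‖ 1 with h | h
      · have : z t = y t := by
          rw [hzdef]; simp only [ContinuousMap.coe_mk]
          rw [max_eq_left h]; simp
        rw [this]; simp [norm_nonneg]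
      · have hmax : max 1 ‖y t‖ = ‖y t‖ := max_eq_right h.le
        have hy0 : y t ≠ 0 := by
          intro h0; rw [h0] at h; simp at h; linarith
        have : z t - y t = y t * (((‖y t‖ : ℝ) : ℂ)⁻¹ - 1) := by
          rw [hzdef]; simp only [ContinuousMap.coe_mk]; rw [hmax]; ring
        rw [this, norm_mul]
        have hny : (0:ℝ) < ‖y t‖ := by linarith
        have : ‖(((‖y t‖ : ℝ) : ℂ)⁻¹ - 1)‖ = 1 - (‖y t‖)⁻¹ := by
          rw [← Complex.ofReal_one, ← Complex.ofReal_inv, ← Complex.ofReal_sub,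
            Complex.norm_real, Real.norm_of_nonpos (by
              simp only [sub_nonpos]
              exact inv_le_one_of_one_le₀ h.le)]
          ring
        rw [this]
        have expand : ‖y t‖ * (1 - ‖y t‖⁻¹) = ‖y t‖ - 1 := by
          rw [mul_sub, mul_one, mul_inv_cancel₀ hny.ne']
        rw [expand]
        calc ‖y t‖ - 1 ≤ ‖y t‖ - ‖x0 t‖ := by rw [hx0norm t]
          _ ≤ ‖y t - x0 t‖ := norm_sub_norm_le _ _
          _ = ‖x0 t - y t‖ := norm_sub_rev _ _
    calc ‖z t - x0 t‖ ≤ ‖z t - y t‖ + ‖y t - x0 t‖ := norm_sub_le_norm_sub_add_norm_sub _ _ _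
      _ ≤ ‖x0 t - y t‖ + ‖x0 t - y t‖ := by rw [norm_sub_rev (y t)]; exact add_le_add h1 le_rfl
      _ = 2 * ‖x0 t - y t‖ := by ring
  -- integrability of the integrands
  have hzint : Integrable (fun t => (z t) ^ k * w t) m := by
    have hzmeas : Measurable fun t => (z t) ^ k * w t :=
      ((z.continuous.measurable).pow_const k).mul hwm
    refine (integrable_const (1 : ℝ)).mono' hzmeas.aestronglyMeasurable
      (Eventually.of_forall fun t => ?_)
    rw [norm_mul, norm_pow, hw1 t, mul_one]
    exact pow_le_one₀ (norm_nonneg _) (hz1 t)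
  have hx0kint : Integrable (fun t => (x0 t) ^ k * w t) m := by
    have hmeas : Measurable fun t => (x0 t) ^ k * w t := (hx0meas.pow_const k).mul hwm
    refine (integrable_const (1 : ℝ)).mono' hmeas.aestronglyMeasurable
      (Eventually.of_forall fun t => ?_)
    rw [norm_mul, norm_pow, hw1 t, mul_one, hx0norm t, one_pow]
  -- the exact value of the comparison integral
  have hEq : ∫ t, (x0 t) ^ k * w t ∂m = ((m Set.univ).toReal : ℂ) := by
    have hone : ∀ t, (x0 t) ^ k * w t = 1 := by
      intro t
      rw [hx0k t, mul_comm, Complex.mul_conj, Complex.normSq_eq_norm_sq,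
        hw1 t]
      norm_num
    rw [show (fun t => (x0 t) ^ k * w t) = fun _ => (1 : ℂ) from funext hone]
    simp
    rfl
  have hdiff : ‖P z - ((m Set.univ).toReal : ℂ)‖ ≤ ε := by
    rw [hrep z, ← hEq, ← integral_sub hzint hx0kint]
    calc ‖∫ t, ((z t) ^ k * w t - (x0 t) ^ k * w t) ∂m‖
        ≤ ∫ t, ‖(z t) ^ k * w t - (x0 t) ^ k * w t‖ ∂m := norm_integral_le_integral_norm _
      _ ≤ ∫ t, 2 * k * ‖x0 t - y t‖ ∂m := by
          refine integral_mono_of_nonneg (Eventually.of_forall fun t => norm_nonneg _)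
            (((hx0int.sub hyint).norm).const_mul _) (Eventually.of_forall fun t => ?_)
          have hfac : (z t) ^ k * w t - (x0 t) ^ k * w t = ((z t) ^ k - (x0 t) ^ k) * w t := by
            ring
          simp only
          rw [hfac, norm_mul, hw1 t, mul_one]
          calc ‖(z t) ^ k - (x0 t) ^ k‖ ≤ k * ‖z t - x0 t‖ :=
                norm_pow_sub_pow_le_aux _ _ (hz1 t) (hx0norm t).le k
            _ ≤ (k : ℝ) * (2 * ‖x0 t - y t‖) :=
                mul_le_mul_of_nonneg_left (hzclose t) (Nat.cast_nonneg k)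
            _ = 2 * k * ‖x0 t - y t‖ := by ring
      _ = 2 * k * ∫ t, ‖x0 t - y t‖ ∂m := integral_const_mul _ _
      _ ≤ 2 * k * δ := by
          refine mul_le_mul_of_nonneg_left hy (by positivity)
      _ = ε := by rw [hδ]; field_simp
  have hzb : ‖z‖ ≤ 1 := (ContinuousMap.norm_le _ zero_le_one).mpr hz1
  calc (m Set.univ).toReal = ‖(((m Set.univ).toReal : ℝ) : ℂ)‖ := by
        rw [Complex.norm_real, Real.norm_of_nonneg ENNReal.toReal_nonneg]
    _ = ‖P z - (P z - ((m Set.univ).toReal : ℂ))‖ := by rw [sub_sub_cancel]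
    _ ≤ ‖P z‖ + ‖P z - ((m Set.univ).toReal : ℂ)‖ := norm_sub_le _ _
    _ ≤ polyNorm P + ε := add_le_add (le_polyNorm hP hzb) hdiff


/-- Let `f` be an orthogonally additive holomorphic function of bounded type on
`C(K)` with Taylor expansion `f = ∑_{k ≥ 1} Pₖ` at zero, let `μₖ` (in polar
form `wₖ · mₖ`) be complex regular Borel measures representing the `Pₖ`, and
let `μ` be a finite positive Borel measure with `μₖ ≪ μ` for all `k ≥ 1`.
Then there are `gₖ ∈ L¹(μ)` with `‖gₖ‖_{L¹(μ)} ≤ ‖Pₖ‖`,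
`∑_{k ≥ 1} ‖gₖ‖_{L¹(μ)} rᵏ < ∞` for every `r > 0`, the series `∑ₖ gₖ xᵏ`
converges absolutely in `L¹(μ)` for every `x`, and
`f x = ∫_K ∑_{k ≥ 1} gₖ(t) x(t)^k dμ(t)` for all `x ∈ C(K)`. -/
theorem orthAdd_boundedType_powerSeriesRepr_of_dominating
    {K : Type*} [TopologicalSpace K] [CompactSpace K] [T2Space K]
    [MeasurableSpace K] [BorelSpace K]
    (f : C(K, ℂ) → ℂ) (P : ℕ → C(K, ℂ) → ℂ)
    (hP : ∀ k, 1 ≤ k → IsHomogPoly k (P k))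
    (hf : ∀ x : C(K, ℂ), HasSum (fun k : ℕ => P (k + 1) x) (f x))
    (hb : ∀ r : ℝ, 0 < r → Summable (fun k : ℕ => polyNorm (P (k + 1)) * r ^ (k + 1)))
    (hOA : IsOrthAdd f)
    (m : ℕ → Measure K) (w : ℕ → K → ℂ)
    (hfin : ∀ k, 1 ≤ k → IsFiniteMeasure (m k))
    (hreg : ∀ k, 1 ≤ k → (m k).Regular)
    (hwm : ∀ k, 1 ≤ k → Measurable (w k))
    (hw1 : ∀ k, 1 ≤ k → ∀ t, ‖w k t‖ = 1)
    (hrep : ∀ k, 1 ≤ k → ∀ x : C(K, ℂ), P k x = ∫ t, (x t) ^ k * w k t ∂(m k))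
    (μ : Measure K) [IsFiniteMeasure μ]
    (hac : ∀ k, 1 ≤ k → m k ≪ μ) :
    ∃ g : ℕ → K → ℂ,
      (∀ k, 1 ≤ k → Integrable (g k) μ) ∧
      (∀ k, 1 ≤ k → (∫ t, ‖g k t‖ ∂μ) ≤ polyNorm (P k)) ∧
      (∀ r : ℝ, 0 < r →
        Summable (fun k : ℕ => (∫ t, ‖g (k + 1) t‖ ∂μ) * r ^ (k + 1))) ∧
      (∀ x : C(K, ℂ),
        Summable (fun k : ℕ => ∫ t, ‖g (k + 1) t * (x t) ^ (k + 1)‖ ∂μ)) ∧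
      (∀ x : C(K, ℂ), f x = ∫ t, (∑' k : ℕ, g (k + 1) t * (x t) ^ (k + 1)) ∂μ) := by
  classical
  set g : ℕ → K → ℂ := fun k t => (((m k).rnDeriv μ t).toReal : ℂ) * w k t with hg
  have hgnorm : ∀ k, 1 ≤ k → ∀ t, ‖g k t‖ = ((m k).rnDeriv μ t).toReal := by
    intro k hk t
    rw [hg]
    simp only
    rw [norm_mul, Complex.norm_real, Real.norm_of_nonneg ENNReal.toReal_nonneg, hw1 k hk t,
      mul_one]
  have hgmeas : ∀ k, 1 ≤ k → Measurable (g k) := fun k hk =>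
    (Complex.measurable_ofReal.comp
      ((Measure.measurable_rnDeriv (m k) μ).ennreal_toReal)).mul (hwm k hk)
  have hgint : ∀ k, 1 ≤ k → Integrable (g k) μ := by
    intro k hk
    haveI := hfin k hk
    refine (Measure.integrable_toReal_rnDeriv (μ := m k) (ν := μ)).mono'
      (hgmeas k hk).aestronglyMeasurable (Eventually.of_forall fun t => ?_)
    exact (hgnorm k hk t).le
  have hgL1 : ∀ k, 1 ≤ k → (∫ t, ‖g k t‖ ∂μ) = ((m k) Set.univ).toReal := by
    intro k hk
    haveI := hfin k hk
    rw [show (fun t => ‖g k t‖) = fun t => ((m k).rnDeriv μ t).toReal from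
      funext (hgnorm k hk)]
    exact Measure.integral_toReal_rnDeriv (hac k hk)
  have hgle : ∀ k, 1 ≤ k → (∫ t, ‖g k t‖ ∂μ) ≤ polyNorm (P k) := by
    intro k hk
    haveI := hfin k hk
    haveI := hreg k hk
    rw [hgL1 k hk]
    exact tv_bound k hk (P k) (hP k hk) (m k) (w k) (hwm k hk) (hw1 k hk) (hrep k hk)
  have hpn : ∀ k, 1 ≤ k → 0 ≤ polyNorm (P k) := fun k hk =>
    le_trans (integral_nonneg fun t => norm_nonneg _) (hgle k hk)
  have hPrep : ∀ k, 1 ≤ k → ∀ x : C(K, ℂ), P k x = ∫ t, g k t * (x t) ^ k ∂μ := by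
    intro k hk x
    haveI := hfin k hk
    rw [hrep k hk x, ← MeasureTheory.integral_rnDeriv_smul (hac k hk)]
    congr 1
    funext t
    rw [hg]
    simp only
    rw [Complex.real_smul]
    ring
  have hterm_int : ∀ k, 1 ≤ k → ∀ x : C(K, ℂ),
      Integrable (fun t => g k t * (x t) ^ k) μ := by
    intro k hk x
    refine ((hgint k hk).norm.mul_const (‖x‖ ^ k)).mono'
      (((hgmeas k hk).mul ((x.continuous.measurable).pow_const k)).aestronglyMeasurable)
      (Eventually.of_forall fun t => ?_)
    rw [norm_mul, norm_pow]
    exact mul_le_mul_of_nonneg_left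
      (pow_le_pow_left₀ (norm_nonneg _) (x.norm_coe_le_norm t) k) (norm_nonneg _)
  have hterm_bound : ∀ k, 1 ≤ k → ∀ x : C(K, ℂ),
      (∫ t, ‖g k t * (x t) ^ k‖ ∂μ) ≤ polyNorm (P k) * ‖x‖ ^ k := by
    intro k hk x
    calc (∫ t, ‖g k t * (x t) ^ k‖ ∂μ) ≤ ∫ t, ‖g k t‖ * ‖x‖ ^ k ∂μ := by
          refine integral_mono_of_nonneg (Eventually.of_forall fun t => norm_nonneg _)
            ((hgint k hk).norm.mul_const _) (Eventually.of_forall fun t => ?_)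
          simp only
          rw [norm_mul, norm_pow]
          exact mul_le_mul_of_nonneg_left
            (pow_le_pow_left₀ (norm_nonneg _) (x.norm_coe_le_norm t) k) (norm_nonneg _)
      _ = (∫ t, ‖g k t‖ ∂μ) * ‖x‖ ^ k := integral_mul_const _ _
      _ ≤ polyNorm (P k) * ‖x‖ ^ k :=
          mul_le_mul_of_nonneg_right (hgle k hk) (by positivity)
  have hone : ∀ k : ℕ, 1 ≤ k + 1 := fun k => Nat.succ_le_succ (Nat.zero_le _)
  have hsum4 : ∀ x : C(K, ℂ),
      Summable (fun k : ℕ => ∫ t, ‖g (k + 1) t * (x t) ^ (k + 1)‖ ∂μ) := by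
    intro x
    have hr : (0 : ℝ) < ‖x‖ + 1 := by positivity
    refine Summable.of_nonneg_of_le (fun k => integral_nonneg fun t => norm_nonneg _)
      (fun k => ?_) (hb (‖x‖ + 1) hr)
    calc (∫ t, ‖g (k + 1) t * (x t) ^ (k + 1)‖ ∂μ)
        ≤ polyNorm (P (k + 1)) * ‖x‖ ^ (k + 1) := hterm_bound (k + 1) (hone k) x
      _ ≤ polyNorm (P (k + 1)) * (‖x‖ + 1) ^ (k + 1) :=
          mul_le_mul_of_nonneg_left
            (pow_le_pow_left₀ (norm_nonneg _) (by linarith) _) (hpn (k + 1) (hone k))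
  refine ⟨g, hgint, hgle, ?_, hsum4, ?_⟩
  · intro r hr
    refine Summable.of_nonneg_of_le (fun k => ?_) (fun k => ?_) (hb r hr)
    · exact mul_nonneg (integral_nonneg fun t => norm_nonneg _) (pow_nonneg hr.le _)
    · exact mul_le_mul_of_nonneg_right (hgle (k + 1) (hone k)) (pow_nonneg hr.le _)
  · intro x
    have hsm : ∀ i : ℕ, AEStronglyMeasurable (fun t => g (i + 1) t * (x t) ^ (i + 1)) μ :=
      fun i => (((hgmeas (i + 1) (hone i)).mul
        ((x.continuous.measurable).pow_const (i + 1)))).aestronglyMeasurable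
    have hlt : (∑' i : ℕ, ∫⁻ t, ‖g (i + 1) t * (x t) ^ (i + 1)‖₊ ∂μ) ≠ ⊤ := by
      have heq : ∀ i : ℕ, (∫⁻ t, ‖g (i + 1) t * (x t) ^ (i + 1)‖₊ ∂μ)
          = ENNReal.ofReal (∫ t, ‖g (i + 1) t * (x t) ^ (i + 1)‖ ∂μ) := fun i =>
        (ofReal_integral_norm_eq_lintegral_enorm (hterm_int (i + 1) (hone i) x)).symm
      calc (∑' i : ℕ, ∫⁻ t, ‖g (i + 1) t * (x t) ^ (i + 1)‖₊ ∂μ)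
          = ∑' i : ℕ, ENNReal.ofReal (∫ t, ‖g (i + 1) t * (x t) ^ (i + 1)‖ ∂μ) :=
            tsum_congr heq
        _ = ENNReal.ofReal (∑' i : ℕ, ∫ t, ‖g (i + 1) t * (x t) ^ (i + 1)‖ ∂μ) :=
            (ENNReal.ofReal_tsum_of_nonneg
              (fun i => integral_nonneg fun t => norm_nonneg _) (hsum4 x)).symm
        _ ≠ ⊤ := ENNReal.ofReal_ne_top
    rw [← (hf x).tsum_eq, integral_tsum hsm hlt]
    exact tsum_congr fun k => hPrep (k + 1) (hone k) x
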